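/- For every linear λ-term t there exists a linear combinatory term t₀ such that t₀ β-reduces (in finitely many steps) to t. -/

import Mathlib

/-! STATEMENT 5: every linear λ-term is the β-reduct of a linear combinatory term
(built from I, B, C, free variables and application).
λ-terms are represented with de Bruijn indices. -/

/-- Untyped λ-terms with de Bruijn indices. -/
inductive Tm : Type
  | var : ℕ → Tm
  | app : Tm → Tm → Tm
  | lam : Tm → Tm

namespace Tm

/-- Number of occurrences of the variable with de Bruijn index `k` in a term. -/
def count (k : ℕ) : Tm → ℕ
  | var n => if n = k then 1 else 0
  | app t u => count k t + count k u
  | lam t => count (k + 1) t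

/-- Auxiliary structural condition: every abstraction binds exactly one occurrence. -/
inductive LinearAux : Tm → Prop
  | var (n : ℕ) : LinearAux (var n)
  | app {t u : Tm} : LinearAux t → LinearAux u → LinearAux (t.app u)
  | lam {t : Tm} : LinearAux t → count 0 t = 1 → LinearAux (lam t)

/-- A linear λ-term: every abstraction binds exactly one occurrence of its variable
and every free variable occurs at most once. -/
def Linear (t : Tm) : Prop := LinearAux t ∧ ∀ n : ℕ, count n t ≤ 1

/-- Shift (lift) the free variables with index `≥ c` by one. -/
def shift (c : ℕ) : Tm → Tm
  | var n => if n < c then var n else var (n + 1)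
  | app t u => app (shift c t) (shift c u)
  | lam t => lam (shift (c + 1) t)

/-- Capture-avoiding substitution of `u` for the variable of index `k` in a term. -/
def subst : Tm → ℕ → Tm → Tm
  | var n, k, u => if n = k then u else if k < n then var (n - 1) else var n
  | app a b, k, u => app (subst a k u) (subst b k u)
  | lam a, k, u => lam (subst a (k + 1) (shift 0 u))

/-- One-step β-reduction (congruence closure of the β-rule). -/
inductive Step : Tm → Tm → Prop
  | beta (t u : Tm) : Step (app (lam t) u) (subst t 0 u)
  | appl {t t' : Tm} (u : Tm) : Step t t' → Step (app t u) (app t' u)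
  | appr (t : Tm) {u u' : Tm} : Step u u' → Step (app t u) (app t u')
  | lam {t t' : Tm} : Step t t' → Step (lam t) (lam t')

/-- β-reduction in finitely many steps. -/
def Red : Tm → Tm → Prop := Relation.ReflTransGen Step

/-- The combinator I = λx.x. -/
def Icomb : Tm := lam (var 0)

/-- The combinator B = λxyz.x(yz). -/
def Bcomb : Tm := lam (lam (lam (app (var 2) (app (var 1) (var 0)))))

/-- The combinator C = λxyz.xzy. -/
def Ccomb : Tm := lam (lam (lam (app (app (var 2) (var 0)) (var 1))))

/-- Linear combinatory terms: B, C, I, free variables, and applications thereof. -/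
inductive Combinatory : Tm → Prop
  | I : Combinatory Icomb
  | B : Combinatory Bcomb
  | C : Combinatory Ccomb
  | var (n : ℕ) : Combinatory (var n)
  | app {t u : Tm} : Combinatory t → Combinatory u → Combinatory (t.app u)

end Tm

namespace Tm
-- combinator facts
lemma count_I (k : ℕ) : count k Icomb = 0 := by simp [Icomb, count]
lemma count_B (k : ℕ) : count k Bcomb = 0 := by simp [Bcomb, count]
lemma count_C (k : ℕ) : count k Ccomb = 0 := by simp [Ccomb, count]

lemma shift_I (c : ℕ) : shift c Icomb = Icomb := by simp [Icomb, shift]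
lemma shift_B (c : ℕ) : shift c Bcomb = Bcomb := by simp [Bcomb, shift]
lemma shift_C (c : ℕ) : shift c Ccomb = Ccomb := by simp [Ccomb, shift]

lemma subst_I (k : ℕ) (u : Tm) : subst Icomb k u = Icomb := by simp [Icomb, subst]
lemma subst_B (k : ℕ) (u : Tm) : subst Bcomb k u = Bcomb := by
  simp [Bcomb, subst]
lemma subst_C (k : ℕ) (u : Tm) : subst Ccomb k u = Ccomb := by
  simp [Ccomb, subst]

lemma subst_shift (t : Tm) : ∀ (c : ℕ) (u : Tm), subst (shift c t) c u = t := by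
  induction t with
  | var n =>
    intro c u
    by_cases h : n < c
    · simp [shift, h, subst, show n ≠ c by omega, show ¬ c < n by omega]
    · simp [shift, h, subst, show n + 1 ≠ c by omega, show c < n + 1 by omega]
  | app a b iha ihb => intro c u; simp [shift, subst, iha, ihb]
  | lam a ih => intro c u; simp [shift, subst, ih]

lemma shift_shift (t : Tm) : ∀ c : ℕ, shift c (shift c t) = shift (c + 1) (shift c t) := by
  induction t with
  | var n =>
    intro c
    by_cases h : n < c
    · simp [shift, h, show n < c + 1 by omega]
    · simp [shift, h, show ¬ n + 1 < c by omega, show ¬ n + 1 < c + 1 by omega]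
  | app a b iha ihb => intro c; simp [shift, iha, ihb]
  | lam a ih => intro c; simp [shift, ih]

lemma subst_shift_var (t : Tm) : ∀ c : ℕ, subst (shift (c + 1) t) c (var c) = t := by
  induction t with
  | var n =>
    intro c
    by_cases h : n < c + 1
    · by_cases h2 : n = c
      · simp [shift, h, subst, h2]
      · simp [shift, h, subst, h2, show ¬ c < n by omega]
    · simp [shift, h, subst, show n + 1 ≠ c by omega, show c < n + 1 by omega]
  | app a b iha ihb => intro c; simp [shift, subst, iha, ihb]
  | lam a ih => intro c; simp [shift, subst, ih]

-- Red congruences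
lemma Red.appl {t t' : Tm} (u : Tm) (h : Red t t') : Red (app t u) (app t' u) :=
  Relation.ReflTransGen.lift (fun x => app x u) (fun _ _ h => Step.appl u h) _ _ h

lemma Red.appr (t : Tm) {u u' : Tm} (h : Red u u') : Red (app t u) (app t u') :=
  Relation.ReflTransGen.lift (fun x => app t x) (fun _ _ h => Step.appr t h) _ _ h

lemma Red.lamc {t t' : Tm} (h : Red t t') : Red (lam t) (lam t') :=
  Relation.ReflTransGen.lift lam (fun _ _ h => Step.lam h) _ _ h

lemma Red.step {t t' : Tm} (h : Step t t') : Red t t' := Relation.ReflTransGen.single h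

-- lemmas on combinatory terms with count 0 = 0
lemma count_subst_comb {B : Tm} (hB : Combinatory B) :
    count 0 B = 0 → ∀ (k : ℕ) (u : Tm), count k (subst B 0 u) = count (k + 1) B := by
  induction hB with
  | I => intro _ k u; rw [subst_I]; simp [count_I]
  | B => intro _ k u; rw [subst_B]; simp [count_B]
  | C => intro _ k u; rw [subst_C]; simp [count_C]
  | var n =>
    intro h k u
    simp [count] at h
    simp [subst, h, show 0 < n by omega, count]
    by_cases h2 : n = k + 1
    · simp [h2]
    · simp [h2, show n - 1 ≠ k by omega]
  | app hA hB ihA ihB =>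
    intro h k u
    simp [count] at h
    simp [subst, count, ihA h.1 k u, ihB h.2 k u]

lemma comb_subst {B : Tm} (hB : Combinatory B) :
    count 0 B = 0 → ∀ u : Tm, Combinatory (subst B 0 u) := by
  induction hB with
  | I => intro _ u; rw [subst_I]; exact Combinatory.I
  | B => intro _ u; rw [subst_B]; exact Combinatory.B
  | C => intro _ u; rw [subst_C]; exact Combinatory.C
  | var n =>
    intro h u
    simp [count] at h
    simp [subst, h, show 0 < n by omega]
    exact Combinatory.var _
  | app hA hB ihA ihB =>
    intro h u
    simp [count] at h
    exact Combinatory.app (ihA h.1 u) (ihB h.2 u)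

lemma shift_subst_comb {B : Tm} (hB : Combinatory B) :
    count 0 B = 0 → ∀ u : Tm, shift 0 (subst B 0 u) = B := by
  induction hB with
  | I => intro _ u; rw [subst_I, shift_I]
  | B => intro _ u; rw [subst_B, shift_B]
  | C => intro _ u; rw [subst_C, shift_C]
  | var n =>
    intro h u
    simp [count] at h
    simp [subst, h, show 0 < n by omega, shift]
    omega
  | app hA hB ihA ihB =>
    intro h u
    simp [count] at h
    simp [subst, shift, ihA h.1 u, ihB h.2 u]

lemma comb_linearAux {t : Tm} (h : Combinatory t) : LinearAux t := by
  induction h with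
  | I => exact LinearAux.lam (LinearAux.var 0) (by simp [count])
  | B =>
    refine LinearAux.lam (LinearAux.lam (LinearAux.lam ?_ ?_) ?_) ?_ <;>
      first
        | exact LinearAux.app (LinearAux.var 2) (LinearAux.app (LinearAux.var 1) (LinearAux.var 0))
        | simp [count]
  | C =>
    refine LinearAux.lam (LinearAux.lam (LinearAux.lam ?_ ?_) ?_) ?_ <;>
      first
        | exact LinearAux.app (LinearAux.app (LinearAux.var 2) (LinearAux.var 0)) (LinearAux.var 1)
        | simp [count]
  | var n => exact LinearAux.var n
  | app _ _ iht ihu => exact LinearAux.app iht ihu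

-- key reduction computations
lemma redC (A Q : Tm) : Red (app (app Ccomb (lam A)) Q) (lam (app A (shift 0 Q))) := by
  have s1 : Step (app Ccomb (lam A))
      (lam (lam (app (app (lam (shift 1 (shift 1 A))) (var 0)) (var 1)))) := by
    have h := Step.beta (lam (lam (app (app (var 2) (var 0)) (var 1)))) (lam A)
    simpa [subst, shift, Ccomb] using h
  have s2 : Step (app (lam (lam (app (app (lam (shift 1 (shift 1 A))) (var 0)) (var 1)))) Q)
      (lam (app (app (lam (shift 1 A)) (var 0)) (shift 0 Q))) := by
    have h := Step.beta (lam (app (app (lam (shift 1 (shift 1 A))) (var 0)) (var 1))) Q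
    simpa [subst, shift_shift, subst_shift] using h
  have s3 : Step (lam (app (app (lam (shift 1 A)) (var 0)) (shift 0 Q)))
      (lam (app A (shift 0 Q))) := by
    have h := Step.beta (shift 1 A) (var 0)
    rw [subst_shift_var] at h
    exact Step.lam (Step.appl _ h)
  exact Relation.ReflTransGen.head (Step.appl Q s1)
    (Relation.ReflTransGen.head s2 (Red.step s3))

lemma redB (P B' : Tm) : Red (app (app Bcomb P) (lam B')) (lam (app (shift 0 P) B')) := by
  have s1 : Step (app Bcomb P)
      (lam (lam (app (shift 1 (shift 0 P)) (app (var 1) (var 0))))) := by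
    have h := Step.beta (lam (lam (app (var 2) (app (var 1) (var 0))))) P
    simpa [subst, shift, shift_shift, Bcomb] using h
  have s2 : Step (app (lam (lam (app (shift 1 (shift 0 P)) (app (var 1) (var 0))))) (lam B'))
      (lam (app (shift 0 P) (app (lam (shift 1 B')) (var 0)))) := by
    have h := Step.beta (lam (app (shift 1 (shift 0 P)) (app (var 1) (var 0)))) (lam B')
    simpa [subst, shift, subst_shift] using h
  have s3 : Step (lam (app (shift 0 P) (app (lam (shift 1 B')) (var 0))))
      (lam (app (shift 0 P) B')) := by
    have h := Step.beta (shift 1 B') (var 0)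
    rw [subst_shift_var] at h
    exact Step.lam (Step.appr _ h)
  exact Relation.ReflTransGen.head (Step.appl _ s1)
    (Relation.ReflTransGen.head s2 (Red.step s3))

/-- BCI bracket abstraction (meaningful on combinatory-shaped terms where
the variable 0 occurs exactly once). -/
def abs : Tm → Tm
  | var _ => Icomb
  | app a b =>
    if count 0 a = 1 then app (app Ccomb (abs a)) (subst b 0 (var 0))
    else app (app Bcomb (subst a 0 (var 0))) (abs b)
  | lam _ => Icomb

lemma abs_comb {M : Tm} (hM : Combinatory M) :
    count 0 M = 1 → Combinatory (abs M) := by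
  induction hM with
  | I => intro h; rw [count_I] at h; omega
  | B => intro h; rw [count_B] at h; omega
  | C => intro h; rw [count_C] at h; omega
  | var n => intro _; exact Combinatory.I
  | app hA hB ihA ihB =>
    rename_i A B
    intro h
    simp only [count] at h
    by_cases hc : count 0 A = 1
    · have hb0 : count 0 B = 0 := by omega
      rw [abs, if_pos hc]
      exact Combinatory.app (Combinatory.app Combinatory.C (ihA hc))
        (comb_subst hB hb0 _)
    · have ha0 : count 0 A = 0 := by omega
      have hb1 : count 0 B = 1 := by omega
      rw [abs, if_neg hc]
      exact Combinatory.app (Combinatory.app Combinatory.B (comb_subst hA ha0 _))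
        (ihB hb1)

lemma count_abs {M : Tm} (hM : Combinatory M) :
    count 0 M = 1 → ∀ k, count k (abs M) = count (k + 1) M := by
  induction hM with
  | I => intro h; rw [count_I] at h; omega
  | B => intro h; rw [count_B] at h; omega
  | C => intro h; rw [count_C] at h; omega
  | var n =>
    intro h k
    simp [count] at h
    simp [abs, h, count_I, count]
  | app hA hB ihA ihB =>
    rename_i A B
    intro h k
    simp only [count] at h
    by_cases hc : count 0 A = 1
    · have hb0 : count 0 B = 0 := by omega
      rw [abs, if_pos hc]
      simp [count, count_C, ihA hc k, count_subst_comb hB hb0 k]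
    · have ha0 : count 0 A = 0 := by omega
      have hb1 : count 0 B = 1 := by omega
      rw [abs, if_neg hc]
      simp [count, count_B, ihB hb1 k, count_subst_comb hA ha0 k]

lemma absRed {M : Tm} (hM : Combinatory M) :
    count 0 M = 1 → Red (abs M) (lam M) := by
  induction hM with
  | I => intro h; rw [count_I] at h; omega
  | B => intro h; rw [count_B] at h; omega
  | C => intro h; rw [count_C] at h; omega
  | var n =>
    intro h
    simp [count] at h
    subst h
    exact Relation.ReflTransGen.refl
  | app hA hB ihA ihB =>
    rename_i A B
    intro h
    simp only [count] at h
    by_cases hc : count 0 A = 1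
    · have hb0 : count 0 B = 0 := by omega
      rw [abs, if_pos hc]
      have h1 : Red (app (app Ccomb (abs A)) (subst B 0 (var 0)))
          (app (app Ccomb (lam A)) (subst B 0 (var 0))) :=
        Red.appl _ (Red.appr _ (ihA hc))
      have h2 := redC A (subst B 0 (var 0))
      rw [shift_subst_comb hB hb0] at h2
      exact h1.trans h2
    · have ha0 : count 0 A = 0 := by omega
      have hb1 : count 0 B = 1 := by omega
      rw [abs, if_neg hc]
      have h1 : Red (app (app Bcomb (subst A 0 (var 0))) (abs B))
          (app (app Bcomb (subst A 0 (var 0))) (lam B)) :=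
        Red.appr _ (ihB hb1)
      have h2 := redB (subst A 0 (var 0)) B
      rw [shift_subst_comb hA ha0] at h2
      exact h1.trans h2

/-- Translation of linear λ-terms into combinatory terms. -/
def trans : Tm → Tm
  | var n => var n
  | app a b => app (trans a) (trans b)
  | lam a => abs (trans a)

lemma trans_spec : ∀ t : Tm, LinearAux t →
    Combinatory (trans t) ∧ ∀ k, count k (trans t) = count k t := by
  intro t ht
  induction ht with
  | var n => exact ⟨Combinatory.var n, fun k => rfl⟩
  | app hA hB ihA ihB =>
    exact ⟨Combinatory.app ihA.1 ihB.1,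
      fun k => by simp [trans, count, ihA.2 k, ihB.2 k]⟩
  | lam ht hc ih =>
    rename_i a
    have hc' : count 0 (trans a) = 1 := by rw [ih.2 0]; exact hc
    exact ⟨abs_comb ih.1 hc',
      fun k => by rw [trans, count_abs ih.1 hc' k, ih.2 (k + 1)]; rfl⟩

lemma trans_red : ∀ t : Tm, LinearAux t → Red (trans t) t := by
  intro t ht
  induction ht with
  | var n => exact Relation.ReflTransGen.refl
  | app hA hB ihA ihB => exact (Red.appl _ ihA).trans (Red.appr _ ihB)
  | lam ht hc ih =>
    rename_i a
    have hc' : count 0 (trans a) = 1 := by rw [(trans_spec a ht).2 0]; exact hc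
    exact (absRed (trans_spec a ht).1 hc').trans (Red.lamc ih)

end Tm

theorem stmt_5 (t : Tm) (ht : Tm.Linear t) :
    ∃ t₀ : Tm, Tm.Combinatory t₀ ∧ Tm.Linear t₀ ∧ Tm.Red t₀ t := by
  obtain ⟨hcomb, hcount⟩ := Tm.trans_spec t ht.1
  exact ⟨Tm.trans t, hcomb,
    ⟨Tm.comb_linearAux hcomb, fun n => by rw [hcount n]; exact ht.2 n⟩,
    Tm.trans_red t ht.1⟩
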